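/- For every A ∈ ℝ^{m×n} and 1 ≤ k ≤ min(m,n), there exists a subset I ⊆ {1,…,n} with |I| = k and a matrix P ∈ ℝ^{k×n} such that ‖P‖_2 ≤ √(1+k(n−k)) and ‖A − A(:,I)·P‖_2 ≤ √(1+k(n−k))·σ_{k+1}(A), where σ_{k+1}(A) is the (k+1)-st largest singular value of A (taken as 0 if k = min(m,n)). -/

import Mathlib

open scoped Matrix.Norms.L2Operator

/-- The `j`-th largest singular value of a matrix, defined via approximation
numbers: `σ_j(A) = inf { ‖A - B‖ : rank B < j }` (spectral norm). -/
noncomputable def sv {m n : ℕ} (A : Matrix (Fin m) (Fin n) ℝ) (j : ℕ) : ℝ :=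
  sInf {r | ∃ B : Matrix (Fin m) (Fin n) ℝ, B.rank < j ∧ r = ‖A - B‖}

open Matrix

lemma l2_le_frob {a b : ℕ} (M : Matrix (Fin a) (Fin b) ℝ) :
    ‖M‖ ≤ Real.sqrt (∑ i, ∑ j, M i j ^ 2) := by
  rw [Matrix.l2_opNorm_def]
  refine ContinuousLinearMap.opNorm_le_bound _ (Real.sqrt_nonneg _) fun x => ?_
  have hx : ‖x‖ = Real.sqrt (∑ j, (x j) ^ 2) := by
    rw [EuclideanSpace.norm_eq]
    congr 1; apply Finset.sum_congr rfl; intro j _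
    rw [Real.norm_eq_abs, sq_abs]
  have happ : ‖(Matrix.toEuclideanLin.trans LinearMap.toContinuousLinearMap) M x‖
      = Real.sqrt (∑ i, (∑ j, M i j * x j) ^ 2) := by
    rw [show (Matrix.toEuclideanLin.trans LinearMap.toContinuousLinearMap) M x
      = Matrix.toEuclideanLin M x from rfl, EuclideanSpace.norm_eq]
    congr 1; apply Finset.sum_congr rfl; intro i _
    rw [Real.norm_eq_abs, sq_abs]
    congr 1
  rw [happ, hx, ← Real.sqrt_mul (by positivity)]
  apply Real.sqrt_le_sqrt
  rw [Finset.sum_mul]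
  apply Finset.sum_le_sum
  intro i _
  exact Finset.sum_mul_sq_le_sq_mul_sq _ _ _

lemma rank_factor {m n k : ℕ} (B : Matrix (Fin m) (Fin n) ℝ) (h : B.rank ≤ k) :
    ∃ (X : Matrix (Fin m) (Fin k) ℝ) (C : Matrix (Fin k) (Fin n) ℝ), B = X * C := by
  classical
  set W := LinearMap.range B.mulVecLin with hW
  have hfr : Module.finrank ℝ W ≤ k := h
  let b := Module.finBasis ℝ W
  let v : Fin k → (Fin m → ℝ) := fun i =>
    if hi : (i : ℕ) < Module.finrank ℝ W then (b ⟨i, hi⟩ : Fin m → ℝ) else 0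
  have hcol : ∀ j, ∃ c : Fin k → ℝ, ∑ i, c i • v i = fun a => B a j := by
    intro j
    have hmem : (fun a => B a j) ∈ W := by
      refine ⟨Pi.single j 1, ?_⟩
      ext a
      simp [Matrix.mulVecLin_apply, Matrix.mulVec_single]
    refine ⟨fun i => if hi : (i : ℕ) < Module.finrank ℝ W then b.repr ⟨_, hmem⟩ ⟨i, hi⟩ else 0, ?_⟩
    have hbs := b.sum_repr ⟨_, hmem⟩
    set F : Fin k → (Fin m → ℝ) := fun i => (if hi : (i : ℕ) < Module.finrank ℝ W then
        (b.repr ⟨_, hmem⟩) ⟨i, hi⟩ else 0) • v i with hF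
    calc ∑ i, F i
        = ∑ i ∈ Finset.univ.map (Fin.castLEEmb hfr), F i := by
          refine (Finset.sum_subset (Finset.subset_univ _) ?_).symm
          intro i _ hi
          have hni : ¬ ((i : ℕ) < Module.finrank ℝ W) := by
            intro hlt
            exact hi (Finset.mem_map.2 ⟨⟨i, hlt⟩, Finset.mem_univ _, by
              simp [Fin.castLEEmb, Fin.castLE]⟩)
          simp [hF, hni]
      _ = ∑ r, F (Fin.castLEEmb hfr r) := Finset.sum_map _ _ _
      _ = ∑ r : Fin (Module.finrank ℝ W), (((b.repr ⟨_, hmem⟩) r • b r : W) : Fin m → ℝ) := by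
          refine Finset.sum_congr rfl fun r _ => ?_
          have hr : ((Fin.castLEEmb hfr r : Fin k) : ℕ) < Module.finrank ℝ W := by simp
          simp only [hF, dif_pos hr, v]
          norm_num
      _ = ((∑ r : Fin (Module.finrank ℝ W), (b.repr ⟨_, hmem⟩) r • b r : W) : Fin m → ℝ) := by
          push_cast
          rfl
      _ = fun a => B a j := by rw [hbs]
  choose c hc using hcol
  refine ⟨Matrix.of fun a i => v i a, Matrix.of fun i j => c j i, ?_⟩
  ext a j
  rw [Matrix.mul_apply]
  have := congrFun (hc j) a
  simp only [Finset.sum_apply, Pi.smul_apply, smul_eq_mul] at this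
  rw [← this]; exact Finset.sum_congr rfl fun i _ => mul_comm _ _

lemma maxvol {k n : ℕ} (C : Matrix (Fin k) (Fin n) ℝ) (g₀ : Fin k → Fin n)
    (h0 : (C.submatrix id g₀).det ≠ 0) :
    ∃ g : Fin k → Fin n, Function.Injective g ∧ IsUnit (C.submatrix id g).det ∧
      ∀ i j, |((C.submatrix id g)⁻¹ * C) i j| ≤ 1 := by
  classical
  obtain ⟨g, -, hmax⟩ := Finset.exists_max_image Finset.univ
    (fun g => |(C.submatrix id g).det|) ⟨g₀, Finset.mem_univ _⟩
  have hpos : 0 < |(C.submatrix id g).det| :=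
    lt_of_lt_of_le (abs_pos.2 h0) (hmax g₀ (Finset.mem_univ _))
  have hdet : (C.submatrix id g).det ≠ 0 := fun h => by simp [h] at hpos
  have hinj : Function.Injective g := by
    intro a b hab
    by_contra hne
    apply hdet
    apply Matrix.det_zero_of_column_eq hne
    intro r
    simp [Matrix.submatrix_apply, hab]
  refine ⟨g, hinj, isUnit_iff_ne_zero.2 hdet, fun i j => ?_⟩
  set D := C.submatrix id g with hD
  have happ : (D⁻¹ * C) i j = (D.det)⁻¹ * (D.updateCol i (fun t => C t j)).det := by
    rw [Matrix.inv_def, Ring.inverse_eq_inv]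
    rw [Matrix.mul_apply]
    have : ∀ t, ((D.det)⁻¹ • D.adjugate) i t * C t j
        = (D.det)⁻¹ * (D.adjugate i t * C t j) := by
      intro t; simp [Matrix.smul_apply, mul_assoc]
    rw [Finset.sum_congr rfl fun t _ => this t, ← Finset.mul_sum]
    congr 1
    have hcr := Matrix.cramer_eq_adjugate_mulVec D (fun t => C t j)
    have h2 : D.adjugate.mulVec (fun t => C t j) i = ∑ t, D.adjugate i t * C t j := rfl
    rw [← h2, ← congrFun hcr i, Matrix.cramer_apply]
  have hupdate : D.updateCol i (fun t => C t j) = C.submatrix id (Function.update g i j) := by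
    ext a b
    rw [Matrix.updateCol_apply]
    by_cases hbi : b = i <;> simp [hbi, Function.update_apply, hD]
  rw [happ, hupdate, abs_mul, abs_inv]
  rw [inv_mul_le_iff₀ hpos]
  simpa using hmax (Function.update g i j) (Finset.mem_univ _)

noncomputable def selS {k n : ℕ} (g : Fin k → Fin n) : Matrix (Fin n) (Fin k) ℝ :=
  Matrix.of fun j i => if j = g i then (1:ℝ) else 0

lemma mul_selS {q k n : ℕ} (g : Fin k → Fin n) (M : Matrix (Fin q) (Fin n) ℝ) :
    M * selS g = M.submatrix id g := by
  ext a i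
  simp [Matrix.mul_apply, selS, mul_ite]

lemma selS_conj_mul {k n : ℕ} (g : Fin k → Fin n) (hg : Function.Injective g) :
    (selS g)ᴴ * selS g = 1 := by
  ext t t'
  simp only [Matrix.mul_apply, Matrix.conjTranspose_apply, selS, Matrix.of_apply, star_trivial,
    ite_mul, one_mul, zero_mul]
  rw [Finset.sum_ite_eq' Finset.univ (g t) (fun x => if x = g t' then (1:ℝ) else 0)]
  simp [Matrix.one_apply, hg.eq_iff, eq_comm]

lemma idem_norm_le {n : ℕ} (E : Matrix (Fin n) (Fin n) ℝ) (h1 : Eᴴ = E) (h2 : E * E = E) :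
    ‖E‖ ≤ 1 := by
  have h := Matrix.l2_opNorm_conjTranspose_mul_self E
  rw [h1, h2] at h
  nlinarith [norm_nonneg E]

lemma norm_mul_self {a b : ℕ} (M : Matrix (Fin a) (Fin b) ℝ) :
    ‖M * Mᴴ‖ = ‖M‖ * ‖M‖ := by
  have h := Matrix.l2_opNorm_conjTranspose_mul_self Mᴴ
  rwa [Matrix.conjTranspose_conjTranspose, Matrix.l2_opNorm_conjTranspose] at h

lemma sel_bounds {k l : ℕ} (g : Fin k → Fin (k + l)) (hg : Function.Injective g)
    (P : Matrix (Fin k) (Fin (k + l)) ℝ) (hPg : P.submatrix id g = 1)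
    (hPb : ∀ i j, |P i j| ≤ 1) :
    ‖P‖ ≤ Real.sqrt (1 + (k : ℝ) * l) ∧
      ‖(1 : Matrix (Fin (k+l)) (Fin (k+l)) ℝ) - selS g * P‖ ≤ Real.sqrt (1 + (k : ℝ) * l) := by
  classical
  set S := selS g with hS
  set R : Matrix (Fin k) (Fin (k+l)) ℝ :=
    Matrix.of (fun i j => if ∃ t, g t = j then 0 else P i j) with hR
  -- decomposition of P
  have hPd : P = Sᴴ + R := by
    ext i j
    by_cases hj : ∃ t, g t = j
    · obtain ⟨t, rfl⟩ := hj
      have h1 : P i (g t) = (1 : Matrix (Fin k) (Fin k) ℝ) i t := by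
        rw [← hPg]; rfl
      simp only [Matrix.add_apply, Matrix.conjTranspose_apply, hS, selS, Matrix.of_apply,
        star_trivial, hR]
      rw [if_pos (⟨t, rfl⟩ : ∃ t', g t' = g t), h1]
      simp [Matrix.one_apply, hg.eq_iff, eq_comm]
    · simp only [Matrix.add_apply, Matrix.conjTranspose_apply, hS, selS, Matrix.of_apply,
        star_trivial, hR]
      rw [if_neg hj, if_neg (fun h : j = g i => hj ⟨i, h.symm⟩)]
      ring
  -- R kills selected columns
  have hRS : R * S = 0 := by
    rw [hS, mul_selS g R]
    ext i t
    simp only [Matrix.submatrix_apply, hR, Matrix.of_apply, id_eq, Matrix.zero_apply]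
    rw [if_pos (⟨t, rfl⟩ : ∃ t', g t' = g t)]
  have hSS : Sᴴ * S = 1 := selS_conj_mul g hg
  -- Frobenius bound on R
  have hcard : ((Finset.univ.filter (fun j : Fin (k+l) => ¬ ∃ t, g t = j)).card : ℝ) = l := by
    have he : Finset.univ.filter (fun j : Fin (k+l) => ¬ ∃ t, g t = j)
        = Finset.univ \ Finset.univ.image g := by
      ext j; simp
    rw [he, Finset.card_sdiff_of_subset (Finset.subset_univ _),
      Finset.card_image_of_injective _ hg, Finset.card_univ, Finset.card_univ]
    simp
  have hfrob : ∑ i, ∑ j, R i j ^ 2 ≤ (k : ℝ) * l := by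
    have hrow : ∀ i, ∑ j, R i j ^ 2 ≤ (l : ℝ) := by
      intro i
      have h1 : ∀ j, R i j ^ 2 ≤ (if ∃ t, g t = j then (0:ℝ) else 1) := by
        intro j
        by_cases hj : ∃ t, g t = j
        · simp [hR, hj]
        · simp only [hR, Matrix.of_apply, if_neg hj]
          nlinarith [hPb i j, abs_nonneg (P i j), sq_abs (P i j)]
      calc ∑ j, R i j ^ 2 ≤ ∑ j, (if ∃ t, g t = j then (0:ℝ) else 1) :=
            Finset.sum_le_sum (fun j _ => h1 j)
        _ = (l : ℝ) := by
            rw [Finset.sum_ite, Finset.sum_const, Finset.sum_const]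
            simp only [smul_zero, zero_add, nsmul_eq_mul, mul_one]
            exact hcard
    calc ∑ i, ∑ j, R i j ^ 2 ≤ ∑ _i : Fin k, (l:ℝ) := Finset.sum_le_sum (fun i _ => hrow i)
      _ = (k : ℝ) * l := by simp [mul_comm]
  have hRn : ‖R‖ * ‖R‖ ≤ (k : ℝ) * l := by
    have h1 : ‖R‖ ≤ Real.sqrt ((k:ℝ) * l) :=
      (l2_le_frob R).trans (Real.sqrt_le_sqrt hfrob)
    have h2 : 0 ≤ (k:ℝ) * l := by positivity
    nlinarith [norm_nonneg R, Real.sq_sqrt h2, Real.sqrt_nonneg ((k:ℝ)*l)]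
  -- bound on ‖P‖
  have hPPH : P * Pᴴ = 1 + R * Rᴴ := by
    rw [hPd, Matrix.conjTranspose_add, Matrix.conjTranspose_conjTranspose, Matrix.add_mul,
      Matrix.mul_add, Matrix.mul_add, hSS]
    have h1 : Sᴴ * Rᴴ = (R * S)ᴴ := by rw [Matrix.conjTranspose_mul]
    rw [h1, hRS]
    simp
  have hPn : ‖P‖ ≤ Real.sqrt (1 + (k:ℝ) * l) := by
    have h1 : ‖P‖ * ‖P‖ ≤ 1 + (k:ℝ) * l := by
      rw [← norm_mul_self P, hPPH]
      calc ‖(1 : Matrix (Fin k) (Fin k) ℝ) + R * Rᴴ‖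
          ≤ ‖(1 : Matrix (Fin k) (Fin k) ℝ)‖ + ‖R * Rᴴ‖ := norm_add_le _ _
        _ ≤ 1 + (k:ℝ) * l := by
            have h2 : ‖(1 : Matrix (Fin k) (Fin k) ℝ)‖ ≤ 1 := by
              apply idem_norm_le <;> simp
            have h3 : ‖R * Rᴴ‖ = ‖R‖ * ‖R‖ := norm_mul_self R
            rw [h3]
            linarith
    calc ‖P‖ = Real.sqrt (‖P‖ * ‖P‖) := (Real.sqrt_mul_self (norm_nonneg P)).symm
      _ ≤ Real.sqrt (1 + (k:ℝ) * l) := Real.sqrt_le_sqrt h1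
  -- bound on ‖1 - S P‖
  set E : Matrix (Fin (k+l)) (Fin (k+l)) ℝ := 1 - S * Sᴴ with hE
  have hEH : Eᴴ = E := by
    rw [hE, Matrix.conjTranspose_sub, Matrix.conjTranspose_one, Matrix.conjTranspose_mul,
      Matrix.conjTranspose_conjTranspose]
  have hES : E * S = 0 := by
    rw [hE, Matrix.sub_mul, Matrix.one_mul, Matrix.mul_assoc, hSS, Matrix.mul_one, sub_self]
  have hSE : Sᴴ * E = 0 := by
    rw [hE, Matrix.mul_sub, Matrix.mul_one, ← Matrix.mul_assoc, hSS, Matrix.one_mul, sub_self]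
  have hEE : E * E = E := by
    rw [hE, Matrix.sub_mul, Matrix.one_mul, Matrix.mul_sub, Matrix.mul_one]
    have h4 : S * Sᴴ * (S * Sᴴ) = S * Sᴴ := by
      rw [Matrix.mul_assoc, ← Matrix.mul_assoc Sᴴ, hSS, Matrix.one_mul]
    rw [h4]
    abel
  have hM : (1 : Matrix (Fin (k+l)) (Fin (k+l)) ℝ) - S * P = E - S * R := by
    rw [hPd, Matrix.mul_add, hE]
    abel
  clear_value S R E
  have hMn : ‖(1 : Matrix (Fin (k+l)) (Fin (k+l)) ℝ) - S * P‖ ≤ Real.sqrt (1 + (k:ℝ) * l) := by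
    have hMHM : ((1 : Matrix (Fin (k+l)) (Fin (k+l)) ℝ) - S * P)ᴴ
        * ((1 : Matrix (Fin (k+l)) (Fin (k+l)) ℝ) - S * P) = E + Rᴴ * R := by
      rw [hM]
      have hexp : (E - S * R)ᴴ * (E - S * R)
          = Eᴴ * E - Eᴴ * (S * R) - (S * R)ᴴ * E + (S * R)ᴴ * (S * R) := by
        rw [Matrix.conjTranspose_sub, Matrix.sub_mul, Matrix.mul_sub, Matrix.mul_sub]
        abel
      have h1 : Eᴴ * (S * R) = 0 := by rw [hEH, ← Matrix.mul_assoc, hES, Matrix.zero_mul]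
      have h2 : (S * R)ᴴ * E = 0 := by
        rw [Matrix.conjTranspose_mul, Matrix.mul_assoc, hSE, Matrix.mul_zero]
      have h3 : (S * R)ᴴ * (S * R) = Rᴴ * R := by
        rw [Matrix.conjTranspose_mul, Matrix.mul_assoc, ← Matrix.mul_assoc Sᴴ, hSS,
          Matrix.one_mul]
      rw [hexp, h1, h2, h3, hEH, hEE]
      abel
    have h1 : ‖(1 : Matrix (Fin (k+l)) (Fin (k+l)) ℝ) - S * P‖
        * ‖(1 : Matrix (Fin (k+l)) (Fin (k+l)) ℝ) - S * P‖ ≤ 1 + (k:ℝ) * l := by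
      rw [← Matrix.l2_opNorm_conjTranspose_mul_self, hMHM]
      calc ‖E + Rᴴ * R‖ ≤ ‖E‖ + ‖Rᴴ * R‖ := norm_add_le _ _
        _ ≤ 1 + (k:ℝ) * l := by
            have h2 : ‖E‖ ≤ 1 := idem_norm_le E hEH hEE
            have h3 : ‖Rᴴ * R‖ = ‖R‖ * ‖R‖ := Matrix.l2_opNorm_conjTranspose_mul_self R
            rw [h3]
            linarith
    calc ‖(1 : Matrix (Fin (k+l)) (Fin (k+l)) ℝ) - S * P‖
        = Real.sqrt (‖(1 : Matrix (Fin (k+l)) (Fin (k+l)) ℝ) - S * P‖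
          * ‖(1 : Matrix (Fin (k+l)) (Fin (k+l)) ℝ) - S * P‖) :=
          (Real.sqrt_mul_self (norm_nonneg _)).symm
      _ ≤ Real.sqrt (1 + (k:ℝ) * l) := Real.sqrt_le_sqrt h1
  exact ⟨hPn, hMn⟩

lemma submatrix_id_mul {a b c d : ℕ} (M : Matrix (Fin a) (Fin b) ℝ)
    (N : Matrix (Fin b) (Fin c) ℝ) (f : Fin d → Fin c) :
    (M * N).submatrix id f = M * (N.submatrix id f) := by
  ext i j
  simp [Matrix.mul_apply, Matrix.submatrix_apply]

lemma sv_nonneg {m n : ℕ} (A : Matrix (Fin m) (Fin n) ℝ) (j : ℕ) : 0 ≤ sv A j :=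
  Real.sInf_nonneg (fun r ⟨B, _, hr⟩ => hr ▸ norm_nonneg _)

lemma sv_exists_lt {m n : ℕ} (A : Matrix (Fin m) (Fin n) ℝ) (j : ℕ) (hj : 0 < j)
    (ε : ℝ) (hε : 0 < ε) :
    ∃ B : Matrix (Fin m) (Fin n) ℝ, B.rank < j ∧ ‖A - B‖ < sv A j + ε := by
  have hne : {r | ∃ B : Matrix (Fin m) (Fin n) ℝ, B.rank < j ∧ r = ‖A - B‖}.Nonempty := by
    refine ⟨‖A - 0‖, 0, ?_, rfl⟩
    simpa using hj
  obtain ⟨r, ⟨B, hB, hr⟩, hlt⟩ := Real.lt_sInf_add_pos hne hε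
  exact ⟨B, hB, by rw [← hr]; exact hlt⟩

lemma eps_step (m k l : ℕ) (A : Matrix (Fin m) (Fin (k+l)) ℝ) (ε : ℝ) (hε : 0 < ε) :
    ∃ (g : Fin k → Fin (k+l)) (P : Matrix (Fin k) (Fin (k+l)) ℝ),
      Function.Injective g ∧ ‖P‖ ≤ Real.sqrt (1 + (k:ℝ)*l) ∧
      ‖A - A.submatrix id g * P‖ ≤ Real.sqrt (1 + (k:ℝ)*l) * (sv A (k+1) + ε) := by
  classical
  set σ := sv A (k+1) with hσdef
  obtain ⟨B, hBrank, hBnorm⟩ := sv_exists_lt A (k+1) (Nat.succ_pos k) (ε/2) (half_pos hε)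
  obtain ⟨X, C, hBXC⟩ := rank_factor B (Nat.lt_succ_iff.mp hBrank)
  set E₀ : Matrix (Fin k) (Fin (k+l)) ℝ :=
    Matrix.of (fun i j => if j = Fin.castAdd l i then 1 else 0) with hE₀
  set C₁ := C.submatrix id (Fin.castAdd l) with hC₁
  -- eval of charpoly
  have heval : ∀ δ : ℝ, (Matrix.charpoly (-C₁)).eval δ = (δ • (1 : Matrix (Fin k) (Fin k) ℝ) + C₁).det := by
    intro δ
    have hmap : (Matrix.charmatrix (-C₁)).map (Polynomial.evalRingHom δ)
        = δ • (1 : Matrix (Fin k) (Fin k) ℝ) + C₁ := by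
      ext i j
      by_cases hij : i = j
      · subst hij
        simp [Matrix.charmatrix_apply_eq, Matrix.one_apply, Matrix.smul_apply]
      · simp [Matrix.charmatrix_apply_ne _ _ _ hij, Matrix.one_apply, hij, Matrix.smul_apply]
    rw [Matrix.charpoly, ← hmap]
    exact (RingHom.map_det (Polynomial.evalRingHom δ) (Matrix.charmatrix (-C₁))).symm
      |>.trans rfl |>.symm ▸ rfl
  -- pick a good δ
  set δ₀ := ε / (2 * (‖X * E₀‖ + 1)) with hδ₀
  have hδ₀pos : 0 < δ₀ := by
    apply div_pos hε
    positivity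
  have hroots : {x : ℝ | (Matrix.charpoly (-C₁)).IsRoot x}.Finite :=
    Polynomial.finite_setOf_isRoot (Matrix.charpoly_monic (-C₁)).ne_zero
  have hIoo : (Set.Ioo (0:ℝ) δ₀ \ {x : ℝ | (Matrix.charpoly (-C₁)).IsRoot x}).Nonempty :=
    ((Set.Ioo_infinite hδ₀pos).diff hroots).nonempty
  obtain ⟨δ, hδI, hδr⟩ := hIoo
  have hδpos : 0 < δ := hδI.1
  have hδlt : δ < δ₀ := hδI.2
  set C' := C + δ • E₀ with hC'
  -- the first k columns of C' form an invertible matrix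
  have hsub1 : E₀.submatrix id (Fin.castAdd l) = (1 : Matrix (Fin k) (Fin k) ℝ) := by
    ext i j
    simp only [Matrix.submatrix_apply, hE₀, Matrix.of_apply, id_eq, Matrix.one_apply]
    by_cases h : i = j
    · subst h; simp
    · rw [if_neg (fun hc => h (Fin.castAdd_injective _ _ hc).symm), if_neg h]
  have hdet' : (C'.submatrix id (Fin.castAdd l)).det ≠ 0 := by
    have h1 : C'.submatrix id (Fin.castAdd l) = δ • (1 : Matrix (Fin k) (Fin k) ℝ) + C₁ := by
      have : (C + δ • E₀).submatrix id (Fin.castAdd l)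
          = C.submatrix id (Fin.castAdd l) + δ • E₀.submatrix id (Fin.castAdd l) := by
        ext i j; simp [Matrix.submatrix_apply, Matrix.add_apply, Matrix.smul_apply]
      rw [hC', this, hsub1, ← hC₁, add_comm]
    rw [h1, ← heval δ]
    exact fun h => hδr h
  -- select columns by maximal volume
  obtain ⟨g, hginj, hunit, hPb⟩ := maxvol C' (Fin.castAdd l) hdet'
  set D := C'.submatrix id g with hD
  set P := D⁻¹ * C' with hP
  have hPg : P.submatrix id g = 1 := by
    rw [hP, submatrix_id_mul, ← hD, Matrix.nonsing_inv_mul D hunit]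
  obtain ⟨hPn, hMn⟩ := sel_bounds g hginj P hPg hPb
  refine ⟨g, P, hginj, hPn, ?_⟩
  -- factor the residual
  have hDP : D * P = C' := by
    rw [hP, ← Matrix.mul_assoc, Matrix.mul_nonsing_inv D hunit, Matrix.one_mul]
  have hfac : A - A.submatrix id g * P
      = (A - X * C') * ((1 : Matrix (Fin (k+l)) (Fin (k+l)) ℝ) - selS g * P) := by
    have h2 : (X * C') * (selS g * P) = X * C' := by
      rw [← Matrix.mul_assoc (X * C'), Matrix.mul_assoc X C', mul_selS, ← hD,
        Matrix.mul_assoc X D P, hDP]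
    rw [Matrix.sub_mul, Matrix.mul_sub, Matrix.mul_sub, Matrix.mul_one, Matrix.mul_one, h2,
      ← Matrix.mul_assoc A (selS g) P, mul_selS]
    abel
  -- norm of the residual of the perturbed factorization
  have hAC' : ‖A - X * C'‖ ≤ σ + ε := by
    have h1 : A - X * C' = (A - B) - δ • (X * E₀) := by
      rw [hC', Matrix.mul_add, Matrix.mul_smul, hBXC]
      abel
    rw [h1]
    have h2 : ‖(A - B) - δ • (X * E₀)‖ ≤ ‖A - B‖ + ‖δ • (X * E₀)‖ := norm_sub_le _ _
    have h3 : ‖δ • (X * E₀)‖ = δ * ‖X * E₀‖ := by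
      rw [norm_smul, Real.norm_eq_abs, abs_of_pos hδpos]
    have h4 : δ * ‖X * E₀‖ < ε / 2 := by
      have h5 : δ * ‖X * E₀‖ ≤ δ * (‖X * E₀‖ + 1) := by nlinarith [norm_nonneg (X * E₀)]
      have h6 : δ * (‖X * E₀‖ + 1) < δ₀ * (‖X * E₀‖ + 1) := by
        apply mul_lt_mul_of_pos_right hδlt
        positivity
      have h7 : δ₀ * (‖X * E₀‖ + 1) = ε / 2 := by
        rw [hδ₀]
        field_simp
      linarith
    linarith
  -- conclude
  rw [hfac]
  calc ‖(A - X * C') * ((1 : Matrix (Fin (k+l)) (Fin (k+l)) ℝ) - selS g * P)‖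
      ≤ ‖A - X * C'‖ * ‖(1 : Matrix (Fin (k+l)) (Fin (k+l)) ℝ) - selS g * P‖ :=
        Matrix.l2_opNorm_mul _ _
    _ ≤ (σ + ε) * Real.sqrt (1 + (k:ℝ)*l) := by
        apply mul_le_mul hAC' hMn (norm_nonneg _)
        have := sv_nonneg A (k+1)
        rw [← hσdef] at this
        linarith
    _ = Real.sqrt (1 + (k:ℝ)*l) * (σ + ε) := mul_comm _ _

/-- Existence of a rank-`k` column interpolative decomposition (Liberty et al.,
Lemma 1): with `n = k + l` columns, there is an injective column selection `g`
and coefficient matrix `P` with `‖P‖ ≤ √(1 + k l)` and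
`‖A - A(:,I) P‖ ≤ √(1 + k l) σ_{k+1}(A)`. -/
theorem column_id_exists (m k l : ℕ) (hk : 1 ≤ k) (hkm : k ≤ m)
    (A : Matrix (Fin m) (Fin (k + l)) ℝ) :
    ∃ (g : Fin k → Fin (k + l)) (P : Matrix (Fin k) (Fin (k + l)) ℝ),
      Function.Injective g ∧
      ‖P‖ ≤ Real.sqrt (1 + (k : ℝ) * l) ∧
      ‖A - (A.submatrix id g) * P‖ ≤ Real.sqrt (1 + (k : ℝ) * l) * sv A (k + 1) := by
  classical
  set c := Real.sqrt (1 + (k : ℝ) * l) with hc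
  have hc1 : 1 ≤ c := by
    rw [hc]
    have h0 : (0:ℝ) ≤ (k:ℝ) * l := by positivity
    nlinarith [Real.sq_sqrt (show (0:ℝ) ≤ 1 + (k:ℝ)*l by linarith),
      Real.sqrt_nonneg (1 + (k:ℝ)*l)]
  have hcpos : 0 < c := lt_of_lt_of_le one_pos hc1
  set val : (Fin k → Fin (k+l)) → Matrix (Fin k) (Fin (k+l)) ℝ → ℝ :=
    fun g P => ‖A - A.submatrix id g * P‖ with hval
  -- continuity in P
  have hcont : ∀ g : Fin k → Fin (k+l), Continuous (fun P => val g P) := by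
    intro g
    have hL : Continuous (fun P : Matrix (Fin k) (Fin (k+l)) ℝ => A.submatrix id g * P) := by
      let L : Matrix (Fin k) (Fin (k+l)) ℝ →ₗ[ℝ] Matrix (Fin m) (Fin (k+l)) ℝ :=
        { toFun := fun P => A.submatrix id g * P
          map_add' := fun x y => Matrix.mul_add _ x y
          map_smul' := fun r x => Matrix.mul_smul _ r x }
      exact L.continuous_of_finiteDimensional
    exact (continuous_const.sub hL).norm
  -- minimize over the compact ball for each g
  have hball : IsCompact (Metric.closedBall (0 : Matrix (Fin k) (Fin (k+l)) ℝ) c) :=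
    isCompact_closedBall _ _
  have hmin : ∀ g : Fin k → Fin (k+l),
      ∃ P ∈ Metric.closedBall (0 : Matrix (Fin k) (Fin (k+l)) ℝ) c,
        ∀ Q ∈ Metric.closedBall (0 : Matrix (Fin k) (Fin (k+l)) ℝ) c, val g P ≤ val g Q := by
    intro g
    obtain ⟨P, hPmem, hPmin⟩ := hball.exists_isMinOn
      ⟨0, by simpa using le_of_lt hcpos⟩ (hcont g).continuousOn
    exact ⟨P, hPmem, fun Q hQ => hPmin hQ⟩
  choose Pm hPmmem hPmmin using hmin
  -- minimize over injective selections
  have hGne : (Finset.univ.filter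
      (fun g : Fin k → Fin (k+l) => Function.Injective g)).Nonempty := by
    refine ⟨Fin.castAdd l, ?_⟩
    simp only [Finset.mem_filter, Finset.mem_univ, true_and]
    exact Fin.castAdd_injective k l
  obtain ⟨gm, hgmem, hgmin⟩ := Finset.exists_min_image _ (fun g => val g (Pm g)) hGne
  have hgminj : Function.Injective gm := (Finset.mem_filter.mp hgmem).2
  have hPmball : ‖Pm gm‖ ≤ c := by
    have := hPmmem gm
    rwa [Metric.mem_closedBall, dist_zero_right] at this
  refine ⟨gm, Pm gm, hgminj, hPmball, ?_⟩
  show val gm (Pm gm) ≤ c * sv A (k+1)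
  apply le_of_forall_pos_le_add
  intro ε' hε'
  obtain ⟨g, P, hinj, hPle, hvle⟩ := eps_step m k l A (ε'/c) (div_pos hε' hcpos)
  have hgmem' : g ∈ Finset.univ.filter
      (fun g : Fin k → Fin (k+l) => Function.Injective g) := by
    simp only [Finset.mem_filter, Finset.mem_univ, true_and]; exact hinj
  have hPball : P ∈ Metric.closedBall (0 : Matrix (Fin k) (Fin (k+l)) ℝ) c := by
    rw [Metric.mem_closedBall, dist_zero_right]; exact hPle
  calc val gm (Pm gm) ≤ val g (Pm g) := hgmin g hgmem'
    _ ≤ val g P := hPmmin g P hPball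
    _ ≤ c * (sv A (k+1) + ε'/c) := hvle
    _ = c * sv A (k+1) + ε' := by
        rw [mul_add, mul_div_cancel₀ _ (ne_of_gt hcpos)]
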